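/- Let S : Ω → Matrix(p,p,ℝ) be a random matrix taking values in symmetric matrices with square-integrable entries and entrywise mean E[S] = Σ, where Σ is a p×p real symmetric matrix. Set η = tr(Σ)/p, η₂ = tr(Σ²)/p and a₁ = E[‖S − Σ‖²_F]. Then for all real α, β: E[‖α·I + β·S − Σ‖²_F] = α²·p + β²·a₁ + (1−β)²·η₂·p − 2·α·(1−β)·η·p. -/

import Mathlib

open Matrix MeasureTheory

/-- For a random symmetric `p × p` matrix `S` with square-integrable entries and
entrywise mean `E[S] = M` (symmetric), setting `η = tr(M)/p`, `η₂ = tr(M²)/p`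
and `a₁ = E[‖S − M‖²_F]`, for all real `α, β`:
`E[‖α·I + β·S − M‖²_F] = α²·p + β²·a₁ + (1−β)²·η₂·p − 2·α·(1−β)·η·p`. -/
theorem mse_regularized_scm_expansion (p : ℕ) (hp : 1 ≤ p) {Ω : Type*}
    [MeasurableSpace Ω] (μ : Measure Ω) [IsProbabilityMeasure μ]
    (M : Matrix (Fin p) (Fin p) ℝ) (hM : M.IsSymm)
    (S : Ω → Matrix (Fin p) (Fin p) ℝ) (hS : ∀ ω, (S ω).IsSymm)
    (hL2 : ∀ i j, MemLp (fun ω => S ω i j) 2 μ)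
    (hmean : ∀ i j, (∫ ω, S ω i j ∂μ) = M i j) (α β : ℝ) :
    (∫ ω, ((α • (1 : Matrix (Fin p) (Fin p) ℝ) + β • S ω - M)ᵀ *
        (α • (1 : Matrix (Fin p) (Fin p) ℝ) + β • S ω - M)).trace ∂μ)
      = α ^ 2 * p + β ^ 2 * (∫ ω, ((S ω - M)ᵀ * (S ω - M)).trace ∂μ)
        + (1 - β) ^ 2 * ((M * M).trace / p) * p
        - 2 * α * (1 - β) * (M.trace / p) * p := by
  have hp0 : (p : ℝ) ≠ 0 := Nat.cast_ne_zero.mpr (by omega)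
  set f : Fin p → Fin p → Ω → ℝ := fun i j ω => S ω i j - M i j with hfdef
  set c : Fin p → Fin p → ℝ :=
    fun i j => α * (if i = j then (1:ℝ) else 0) - (1 - β) * M i j with hcdef
  have hfL2 : ∀ i j, MemLp (f i j) 2 μ := fun i j =>
    (hL2 i j).sub (memLp_const (M i j))
  have hfint : ∀ i j, Integrable (f i j) μ := fun i j =>
    (hfL2 i j).integrable one_le_two
  have hfmean : ∀ i j, (∫ ω, f i j ω ∂μ) = 0 := by
    intro i j
    rw [hfdef]
    simp only
    rw [integral_sub (((hL2 i j).integrable one_le_two)) (integrable_const _)]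
    simp [hmean i j]
  have hfsq : ∀ i j, Integrable (fun ω => f i j ω ^ 2) μ := by
    intro i j
    simpa [sq] using ((hfL2 i j).integrable_sq)
  -- trace as sum of squares
  have trace_sq : ∀ A : Matrix (Fin p) (Fin p) ℝ,
      (Aᵀ * A).trace = ∑ i, ∑ j, A j i ^ 2 := by
    intro A; simp [Matrix.trace, Matrix.mul_apply, Matrix.diag, sq]
  -- pointwise expansion
  have hpt : ∀ ω, ((α • (1 : Matrix (Fin p) (Fin p) ℝ) + β • S ω - M)ᵀ *
        (α • (1 : Matrix (Fin p) (Fin p) ℝ) + β • S ω - M)).trace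
      = β ^ 2 * ((S ω - M)ᵀ * (S ω - M)).trace
        + ((∑ i, ∑ j, 2 * β * (c j i * f j i ω)) + ∑ i, ∑ j, c j i ^ 2) := by
    intro ω
    rw [trace_sq, trace_sq, Finset.mul_sum, ← Finset.sum_add_distrib,
      ← Finset.sum_add_distrib]
    refine Finset.sum_congr rfl fun i _ => ?_
    rw [Finset.mul_sum, ← Finset.sum_add_distrib, ← Finset.sum_add_distrib]
    refine Finset.sum_congr rfl fun j _ => ?_
    simp only [Matrix.sub_apply, Matrix.add_apply, Matrix.smul_apply,
      Matrix.one_apply, smul_eq_mul, hfdef, hcdef]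
    by_cases h : j = i <;> simp [h] <;> ring
  calc (∫ ω, ((α • (1 : Matrix (Fin p) (Fin p) ℝ) + β • S ω - M)ᵀ *
        (α • (1 : Matrix (Fin p) (Fin p) ℝ) + β • S ω - M)).trace ∂μ)
      = ∫ ω, (β ^ 2 * ((S ω - M)ᵀ * (S ω - M)).trace
        + ((∑ i, ∑ j, 2 * β * (c j i * f j i ω)) + ∑ i, ∑ j, c j i ^ 2)) ∂μ := by
        exact integral_congr_ae (Filter.Eventually.of_forall hpt)
    _ = β ^ 2 * (∫ ω, ((S ω - M)ᵀ * (S ω - M)).trace ∂μ) + ∑ i, ∑ j, c j i ^ 2 := by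
        have h1 : Integrable (fun ω => β ^ 2 * ((S ω - M)ᵀ * (S ω - M)).trace) μ := by
          apply Integrable.const_mul
          have : (fun ω => ((S ω - M)ᵀ * (S ω - M)).trace)
              = fun ω => ∑ i, ∑ j, f j i ω ^ 2 := by
            funext ω; rw [trace_sq]; simp [hfdef]
          rw [this]
          exact integrable_finset_sum _ fun i _ =>
            integrable_finset_sum _ fun j _ => hfsq j i
        have h2 : Integrable (fun ω => ∑ i, ∑ j, 2 * β * (c j i * f j i ω)) μ :=
          integrable_finset_sum _ fun i _ => integrable_finset_sum _ fun j _ =>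
            ((hfint j i).const_mul _).const_mul _
        have hadd := integral_add (μ := μ) h1
          (h2.add (integrable_const (∑ i, ∑ j, c j i ^ 2)))
        simp only [Pi.add_apply] at hadd
        rw [hadd]
        have hadd2 := integral_add (μ := μ) h2
          (integrable_const (∑ i, ∑ j, c j i ^ 2))
        rw [hadd2, integral_const_mul,
          integral_finset_sum _ (fun i _ => integrable_finset_sum _ fun j _ =>
            ((hfint j i).const_mul _).const_mul _)]
        have : ∀ i : Fin p, (∫ ω, ∑ j, 2 * β * (c j i * f j i ω) ∂μ) = 0 := by
          intro i
          rw [integral_finset_sum _ (fun j _ => ((hfint j i).const_mul _).const_mul _)]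
          refine Finset.sum_eq_zero fun j _ => ?_
          have : (fun ω => 2 * β * (c j i * f j i ω))
              = fun ω => (2 * β * c j i) * f j i ω := by funext ω; ring
          rw [this, integral_const_mul, hfmean, mul_zero]
        simp [this, measure_univ]
    _ = _ := by
        have hMsym : ∀ i j, M j i = M i j := fun i j => by
          rw [show M j i = Mᵀ i j from rfl, hM]
        have hsum : (∑ i, ∑ j, c j i ^ 2)
            = α ^ 2 * p + (1 - β) ^ 2 * (M * M).trace - 2 * α * (1 - β) * M.trace := by
          have : ∀ i j : Fin p, c j i ^ 2
              = α ^ 2 * (if j = i then (1:ℝ) else 0)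
                + (1 - β) ^ 2 * (M j i * M i j)
                - 2 * α * (1 - β) * ((if i = j then (1:ℝ) else 0) * M i j) := by
            intro i j
            rw [hcdef]
            by_cases h : j = i
            · subst h; simp; ring
            · have h' : ¬ i = j := fun h'' => h h''.symm
              simp [h, h', hMsym i j]; ring
          simp_rw [this, Finset.sum_sub_distrib, Finset.sum_add_distrib,
            ← Finset.mul_sum]
          congr 1
          · congr 1
            · simp [Finset.sum_ite_eq, Finset.mem_univ]
            · congr 1
              rw [Matrix.trace, Finset.sum_comm]
              simp [Matrix.diag, Matrix.mul_apply]
          · congr 1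
            rw [Matrix.trace]
            simp [Matrix.diag, Finset.sum_ite_eq, Finset.mem_univ]
        rw [hsum]
        field_simp
        ring
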